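/- In any maximal causal chain of a u-segment of an execution of Algorithm RSP, all actions are executed by pairwise distinct non-root processes of V_u; in particular, any maximal causal chain has length at most the number of non-root processes of V_u, and an execution of computePath by a process v never belongs to a maximal causal chain rooted at v. -/

import Mathlib

open Classical

inductive RStatus : Type
  | I | C | EB | EF
deriving DecidableEq

inductive RRule : Type
  | RC | REB | REF | RI | RR
deriving DecidableEq

/-- A network: a finite simple graph with a distinguished root and
strictly positive symmetric edge weights. -/
structure Network (V : Type) [Fintype V] [DecidableEq V] where
  G : SimpleGraph V
  r : V
  w : V → V → ℝ
  w_symm : ∀ u v : V, w u v = w v u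
  w_pos : ∀ u v : V, G.Adj u v → 0 < w u v

/-- A configuration: each process has a status, a parent pointer and a distance value. -/
structure Config (V : Type) where
  st : V → RStatus
  par : V → V
  d : V → ℝ

variable {V : Type} [Fintype V] [DecidableEq V]

/-- The root's variables are constants: status C and distance 0. -/
def RootConst (N : Network V) (γ : Config V) : Prop :=
  γ.st N.r = RStatus.C ∧ γ.d N.r = 0

/-- v ∈ children(u). -/
def childOf (N : Network V) (γ : Config V) (u v : V) : Prop :=
  N.G.Adj u v ∧ γ.st u ≠ RStatus.I ∧ γ.st v ≠ RStatus.I ∧ γ.par v = u ∧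
    γ.d v ≥ γ.d u + N.w v u ∧ (γ.st v = γ.st u ∨ γ.st u = RStatus.EB)

/-- u is an abnormal root. -/
def abRoot (N : Network V) (γ : Config V) (u : V) : Prop :=
  u ≠ N.r ∧ γ.st u ≠ RStatus.I ∧
    (¬ N.G.Adj u (γ.par u) ∨ γ.st (γ.par u) = RStatus.I ∨
     γ.d u < γ.d (γ.par u) + N.w u (γ.par u) ∨
     (γ.st u ≠ γ.st (γ.par u) ∧ γ.st (γ.par u) ≠ RStatus.EB))

def PReset (N : Network V) (γ : Config V) (u : V) : Prop :=
  γ.st u = RStatus.EF ∧ abRoot N γ u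

def PCorrection (N : Network V) (γ : Config V) (u : V) : Prop :=
  ∃ v : V, N.G.Adj u v ∧ γ.st v = RStatus.C ∧ γ.d v + N.w u v < γ.d u

def guardRC (N : Network V) (γ : Config V) (u : V) : Prop :=
  u ≠ N.r ∧ γ.st u = RStatus.C ∧ PCorrection N γ u

def guardREB (N : Network V) (γ : Config V) (u : V) : Prop :=
  u ≠ N.r ∧ γ.st u = RStatus.C ∧ ¬ PCorrection N γ u ∧
    (abRoot N γ u ∨ γ.st (γ.par u) = RStatus.EB)

def guardREF (N : Network V) (γ : Config V) (u : V) : Prop :=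
  u ≠ N.r ∧ γ.st u = RStatus.EB ∧ ∀ v : V, childOf N γ u v → γ.st v = RStatus.EF

def guardRI (N : Network V) (γ : Config V) (u : V) : Prop :=
  u ≠ N.r ∧ PReset N γ u ∧ ∀ v : V, N.G.Adj u v → γ.st v ≠ RStatus.C

def guardRR (N : Network V) (γ : Config V) (u : V) : Prop :=
  u ≠ N.r ∧ (PReset N γ u ∨ γ.st u = RStatus.I) ∧
    ∃ v : V, N.G.Adj u v ∧ γ.st v = RStatus.C

/-- The effect of the macro computePath at u in the step γ → γ'. -/
def ComputePath (N : Network V) (γ γ' : Config V) (u : V) : Prop :=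
  N.G.Adj u (γ'.par u) ∧ γ.st (γ'.par u) = RStatus.C ∧
  (∀ v : V, N.G.Adj u v → γ.st v = RStatus.C →
      γ.d (γ'.par u) + N.w u (γ'.par u) ≤ γ.d v + N.w u v) ∧
  γ'.d u = γ.d (γ'.par u) + N.w u (γ'.par u) ∧ γ'.st u = RStatus.C

/-- u executes the given rule during the step γ → γ'. -/
def ExecRule (N : Network V) (γ γ' : Config V) (u : V) : RRule → Prop
  | RRule.RC => guardRC N γ u ∧ ComputePath N γ γ' u
  | RRule.REB => guardREB N γ u ∧ γ'.st u = RStatus.EB ∧ γ'.par u = γ.par u ∧ γ'.d u = γ.d u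
  | RRule.REF => guardREF N γ u ∧ γ'.st u = RStatus.EF ∧ γ'.par u = γ.par u ∧ γ'.d u = γ.d u
  | RRule.RI => guardRI N γ u ∧ γ'.st u = RStatus.I ∧ γ'.par u = γ.par u ∧ γ'.d u = γ.d u
  | RRule.RR => guardRR N γ u ∧ ComputePath N γ γ' u

def EnabledAt (N : Network V) (γ : Config V) (u : V) : Prop :=
  guardRC N γ u ∨ guardREB N γ u ∨ guardREF N γ u ∨ guardRI N γ u ∨ guardRR N γ u

/-- A step of the distributed (unfair) daemon: a nonempty set of enabled processes
each atomically executes one of its enabled rules; other processes are unchanged. -/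
def Step (N : Network V) (γ γ' : Config V) : Prop :=
  ∃ S : Set V, S.Nonempty ∧ (∀ u ∈ S, ∃ ρ : RRule, ExecRule N γ γ' u ρ) ∧
    ∀ u : V, u ∉ S → γ'.st u = γ.st u ∧ γ'.par u = γ.par u ∧ γ'.d u = γ.d u

def Terminal (N : Network V) (γ : Config V) : Prop :=
  ∀ u : V, ¬ EnabledAt N γ u

/-- Weight of a walk. -/
noncomputable def walkWeight (N : Network V) {u v : V} (p : N.G.Walk u v) : ℝ :=
  (p.darts.map (fun e => N.w e.toProd.1 e.toProd.2)).sum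

/-- x is the weighted distance from u to v in the graph. -/
def IsWDistBetween (N : Network V) (u v : V) (x : ℝ) : Prop :=
  (∃ p : N.G.Walk u v, walkWeight N p = x) ∧ ∀ p : N.G.Walk u v, x ≤ walkWeight N p

/-- x is the weighted distance d(u,r). -/
def IsWDist (N : Network V) (u : V) (x : ℝ) : Prop :=
  IsWDistBetween N u N.r x

/-- k is the hop-distance between u and v: the minimum number of edges
of a minimum-weight path from u to v. -/
def IsHopDist (N : Network V) (u v : V) (k : ℕ) : Prop :=
  (∃ p : N.G.Walk u v, p.length = k ∧ ∀ q : N.G.Walk u v, walkWeight N p ≤ walkWeight N q) ∧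
  (∀ p : N.G.Walk u v, (∀ q : N.G.Walk u v, walkWeight N p ≤ walkWeight N q) → k ≤ p.length)

/-- Legitimate state of a process. -/
def LegitState (N : Network V) (γ : Config V) (u : V) : Prop :=
  u = N.r ∨
  (N.G.Reachable u N.r ∧ γ.st u = RStatus.C ∧ IsWDist N u (γ.d u) ∧
     N.G.Adj u (γ.par u) ∧ γ.d u = γ.d (γ.par u) + N.w u (γ.par u)) ∨
  (¬ N.G.Reachable u N.r ∧ γ.st u = RStatus.I)

def Legitimate (N : Network V) (γ : Config V) : Prop :=
  ∀ u : V, LegitState N γ u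

/-- An execution: an infinite sequence of configurations (stuttering once terminal),
all respecting the root constants, consecutive ones related by steps. -/
def IsExec (N : Network V) (e : ℕ → Config V) : Prop :=
  (∀ i : ℕ, RootConst N (e i)) ∧
  ∀ i : ℕ, Step N (e i) (e (i+1)) ∨ (Terminal N (e i) ∧ e (i+1) = e i)

/-- u executes some rule at step j of execution e. -/
def ExecAt (N : Network V) (e : ℕ → Config V) (j : ℕ) (u : V) : Prop :=
  ∃ ρ : RRule, ExecRule N (e j) (e (j+1)) u ρ

/-- u executes computePath (rule R_C or R_R) at step j. -/
def CPExec (N : Network V) (e : ℕ → Config V) (j : ℕ) (u : V) : Prop :=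
  ExecRule N (e j) (e (j+1)) u RRule.RC ∨ ExecRule N (e j) (e (j+1)) u RRule.RR

def AliveAbRoot (N : Network V) (γ : Config V) (u : V) : Prop :=
  abRoot N γ u ∧ γ.st u ≠ RStatus.EF

/-- Step j is a u-segment break: some non-root process of V_u ceases to be
an alive abnormal root during step j. -/
def SegBreak (N : Network V) (e : ℕ → Config V) (u : V) (j : ℕ) : Prop :=
  ∃ v : V, v ≠ N.r ∧ N.G.Reachable v u ∧
    AliveAbRoot N (e j) v ∧ ¬ AliveAbRoot N (e (j+1)) v

/-- n_maxCC: the maximum number of non-root processes in a connected component. -/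
noncomputable def nmaxCC (N : Network V) : ℕ :=
  sSup {k : ℕ | ∃ v : V, k = {x : V | x ≠ N.r ∧ N.G.Reachable x v}.ncard}

/-- The interval of steps [s, t) is a u-segment of the execution e
(t = ⊤ encodes a final, unbroken segment). -/
def IsSegment (N : Network V) (e : ℕ → Config V) (u : V) (s : ℕ) (t : ℕ∞) : Prop :=
  (s : ℕ∞) < t ∧ (s = 0 ∨ SegBreak N e u (s-1)) ∧
  (∀ j : ℕ, s ≤ j → ((j : ℕ∞) + 1 < t) → ¬ SegBreak N e u j) ∧
  (∀ m : ℕ, t = (m : ℕ∞) → SegBreak N e u (m-1))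

/-- A causal chain of k+1 actions a_1,…,a_{k+1} in the window [s,t):
a_{i} occurs at time τ i, is a computePath execution by process p (i+1)
setting its parent to p i; a_1 occurs no later than any action of p 0,
and each a_{i+1} occurs after a_i but no later than the next action of a_i's executor. -/
structure IsCausalChain (N : Network V) (e : ℕ → Config V) (s : ℕ) (t : ℕ∞)
    (k : ℕ) (τ : Fin (k+1) → ℕ) (p : Fin (k+2) → V) : Prop where
  mono : StrictMono τ
  lb : ∀ i : Fin (k+1), s ≤ τ i
  ub : ∀ i : Fin (k+1), (τ i : ℕ∞) < t
  cp : ∀ i : Fin (k+1), CPExec N e (τ i) (p i.succ) ∧ (e (τ i + 1)).par (p i.succ) = p i.castSucc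
  root_first : ∀ j : ℕ, s ≤ j → j < τ 0 → ¬ ExecAt N e j (p 0)
  between : ∀ i : Fin k, ∀ j : ℕ, τ i.castSucc < j → j < τ i.succ →
      ¬ ExecAt N e j (p i.castSucc.succ)

/-- A maximal causal chain: a causal chain that cannot be extended by a further action. -/
def IsMaxCausalChain (N : Network V) (e : ℕ → Config V) (s : ℕ) (t : ℕ∞)
    (k : ℕ) (τ : Fin (k+1) → ℕ) (p : Fin (k+2) → V) : Prop :=
  IsCausalChain N e s t k τ p ∧
  ¬ ∃ (j : ℕ) (v : V), τ (Fin.last k) < j ∧ (j : ℕ∞) < t ∧ CPExec N e j v ∧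
      (e (j+1)).par v = p (Fin.last (k+1)) ∧
      ∀ j' : ℕ, τ (Fin.last k) < j' → j' < j → ¬ ExecAt N e j' (p (Fin.last (k+1)))

/-- S_{seg,v}: the set of distance values produced by actions of maximal
causal chains rooted at v of the segment [s,t). -/
def SSeg (N : Network V) (e : ℕ → Config V) (s : ℕ) (t : ℕ∞) (v : V) : Set ℝ :=
  {x : ℝ | ∃ (k : ℕ) (τ : Fin (k+1) → ℕ) (p : Fin (k+2) → V),
      IsMaxCausalChain N e s t k τ p ∧ p 0 = v ∧
      ∃ i : Fin (k+1), x = (e (τ i + 1)).d (p i.succ)}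

def Neutralized (N : Network V) (e : ℕ → Config V) (j : ℕ) (u : V) : Prop :=
  EnabledAt N (e j) u ∧ ¬ EnabledAt N (e (j+1)) u

/-- Every process enabled at time s executes or is neutralized before time t. -/
def CompletesRound (N : Network V) (e : ℕ → Config V) (s t : ℕ) : Prop :=
  s ≤ t ∧ ∀ u : V, EnabledAt N (e s) u →
    ∃ j : ℕ, s ≤ j ∧ j < t ∧ (ExecAt N e j u ∨ Neutralized N e j u)

/-- roundEnd e k: the time at which the k-th round ends (the beginning of round k+1). -/
noncomputable def roundEnd (N : Network V) (e : ℕ → Config V) : ℕ → ℕ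
  | 0 => 0
  | k+1 => sInf {t : ℕ | CompletesRound N e (roundEnd N e k) t}

/-- b 0, b 1, …, b k is a branch: b 0 is the root r or an abnormal root,
and each b (i+1) is a child of b i; b i is at depth i+1. -/
def IsBranch (N : Network V) (γ : Config V) (k : ℕ) (b : Fin (k+1) → V) : Prop :=
  (b 0 = N.r ∨ abRoot N γ (b 0)) ∧ ∀ i : Fin k, childOf N γ (b i.castSucc) (b i.succ)

/-- Membership in the regular language (R_I + ε)(R_R + ε)R_C*(R_EB + ε)(R_EF + ε). -/
def InRSPLang (l : List RRule) : Prop :=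
  ∃ a b c d f : List RRule, l = a ++ b ++ c ++ d ++ f ∧
    (a = [] ∨ a = [RRule.RI]) ∧ (b = [] ∨ b = [RRule.RR]) ∧
    (∀ x ∈ c, x = RRule.RC) ∧ (d = [] ∨ d = [RRule.REB]) ∧ (f = [] ∨ f = [RRule.REF])


section Aux

variable {N : Network V} {e : ℕ → Config V}

lemma exists_flip {P : ℕ → Prop} {a b : ℕ} (hab : a ≤ b) (ha : P a) (hb : ¬ P b) :
    ∃ j, a ≤ j ∧ j < b ∧ P j ∧ ¬ P (j+1) := by
  by_contra hcon
  push_neg at hcon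
  apply hb
  have key : ∀ m, a ≤ m → m ≤ b → P m := by
    intro m hm
    induction m, hm using Nat.le_induction with
    | base => intro _; exact ha
    | succ n hn ih =>
      intro hnb
      exact hcon n hn (by omega) (ih (by omega))
  exact key b hab le_rfl

lemma unchanged (he : IsExec N e) {j : ℕ} {v : V} (h : ¬ ExecAt N e j v) :
    (e (j+1)).st v = (e j).st v ∧ (e (j+1)).par v = (e j).par v ∧
      (e (j+1)).d v = (e j).d v := by
  rcases he.2 j with ⟨S, _, hS, hout⟩ | ⟨_, hT⟩
  · by_cases hv : v ∈ S
    · exact absurd (hS v hv) h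
    · exact hout v hv
  · rw [hT]; exact ⟨rfl, rfl, rfl⟩

lemma d_lt_of_RC {j : ℕ} {v : V} (h : ExecRule N (e j) (e (j+1)) v RRule.RC) :
    (e (j+1)).d v < (e j).d v := by
  obtain ⟨⟨hne, hst, w', adj, hstw, hlt⟩, hadj, hpc, hmin, hd, hstc⟩ := h
  calc (e (j+1)).d v = _ := hd
    _ ≤ (e j).d w' + N.w v w' := hmin w' adj hstw
    _ < (e j).d v := hlt

lemma exec_master {j : ℕ} {v : V} (hex : ExecAt N e j v) :
    ((e j).st v = RStatus.C ∧ (e (j+1)).st v = RStatus.C ∧ v ≠ N.r ∧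
       (e (j+1)).d v < (e j).d v) ∨
    ((e j).st v = RStatus.C ∧ (e (j+1)).st v = RStatus.EB ∧ v ≠ N.r ∧
       (e (j+1)).par v = (e j).par v ∧ (e (j+1)).d v = (e j).d v) ∨
    ((e j).st v = RStatus.EB ∧ (e (j+1)).st v = RStatus.EF ∧ v ≠ N.r ∧
       (e (j+1)).par v = (e j).par v ∧ (e (j+1)).d v = (e j).d v) ∨
    ((e j).st v = RStatus.EF ∧ abRoot N (e j) v ∧ (e (j+1)).st v = RStatus.I ∧ v ≠ N.r ∧
       (e (j+1)).par v = (e j).par v ∧ (e (j+1)).d v = (e j).d v) ∨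
    ((((e j).st v = RStatus.EF ∧ abRoot N (e j) v) ∨ (e j).st v = RStatus.I) ∧
       (e (j+1)).st v = RStatus.C ∧ v ≠ N.r ∧
       ExecRule N (e j) (e (j+1)) v RRule.RR) := by
  obtain ⟨ρ, hρ⟩ := hex
  cases ρ with
  | RC => exact Or.inl ⟨hρ.1.2.1, hρ.2.2.2.2.2, hρ.1.1, d_lt_of_RC hρ⟩
  | REB => exact Or.inr (Or.inl ⟨hρ.1.2.1, hρ.2.1, hρ.1.1, hρ.2.2.1, hρ.2.2.2⟩)
  | REF => exact Or.inr (Or.inr (Or.inl ⟨hρ.1.2.1, hρ.2.1, hρ.1.1, hρ.2.2.1, hρ.2.2.2⟩))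
  | RI => exact Or.inr (Or.inr (Or.inr (Or.inl
      ⟨hρ.1.2.1.1, hρ.1.2.1.2, hρ.2.1, hρ.1.1, hρ.2.2.1, hρ.2.2.2⟩)))
  | RR => exact Or.inr (Or.inr (Or.inr (Or.inr ⟨hρ.1.2.1, hρ.2.2.2.2.2, hρ.1.1, hρ⟩)))

lemma frozen (he : IsExec N e) {q : V} {a b : ℕ} (hab : a ≤ b)
    (hno : ∀ l, a ≤ l → l < b → ¬ ExecAt N e l q) :
    (e b).st q = (e a).st q ∧ (e b).par q = (e a).par q ∧ (e b).d q = (e a).d q := by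
  induction b, hab using Nat.le_induction with
  | base => exact ⟨rfl, rfl, rfl⟩
  | succ n hn ih =>
    have h1 := unchanged he (hno n hn (by omega))
    have h2 := ih (fun l hl hl' => hno l hl (by omega))
    exact ⟨h1.1.trans h2.1, h1.2.1.trans h2.2.1, h1.2.2.trans h2.2.2⟩

lemma d_mono (he : IsExec N e) {q : V} {a b : ℕ} (hab : a ≤ b)
    (hno : ∀ l, a ≤ l → l < b → ¬ ExecRule N (e l) (e (l+1)) q RRule.RR) :
    (e b).d q ≤ (e a).d q := by
  induction b, hab using Nat.le_induction with
  | base => exact le_rfl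
  | succ n hn ih =>
    have step : (e (n+1)).d q ≤ (e n).d q := by
      by_cases hx : ExecAt N e n q
      · rcases exec_master hx with h|h|h|h|h
        · exact h.2.2.2.le
        · exact h.2.2.2.2.le
        · exact h.2.2.2.2.le
        · exact h.2.2.2.2.2.le
        · exact absurd h.2.2.2 (hno n hn (by omega))
      · exact (unchanged he hx).2.2.le
    exact step.trans (ih (fun l hl hl' => hno l hl (by omega)))

lemma main_lemma (he : IsExec N e) {u : V} {s : ℕ} {t : ℕ∞} (hseg : IsSegment N e u s t) :
    ∀ j : ℕ, ∀ (z : V) (n2 : ℕ), z ≠ N.r → N.G.Reachable z u → s ≤ n2 → n2 ≤ j →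
    (j : ℕ∞) < t → (e n2).st z = RStatus.EB →
    ((e j).st z = RStatus.I ∨ (e j).st z = RStatus.C ∨
      ((e j).st z = RStatus.EF ∧ abRoot N (e j) z)) → False := by
  intro j
  induction j using Nat.strong_induction_on with
  | _ j IH =>
  intro z n2 hzr hreach hsn2 hn2j hjt hEB hbad
  have hnedb : ¬ ((e j).st z = RStatus.EB) := by
    rcases hbad with h|h|⟨h,-⟩ <;> simp [h]
  obtain ⟨n2', han, hnj, hP, hnP⟩ :=
    exists_flip (P := fun l => (e l).st z = RStatus.EB) hn2j hEB hnedb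
  have hact : ExecAt N e n2' z := by
    by_contra h
    exact hnP ((unchanged he h).1.trans hP)
  have hREF : (e (n2'+1)).st z = RStatus.EF ∧ (e (n2'+1)).par z = (e n2').par z ∧
      (e (n2'+1)).d z = (e n2').d z := by
    rcases exec_master hact with h|h|h|h|h
    · rw [hP] at h; exact absurd h.1 (by decide)
    · rw [hP] at h; exact absurd h.1 (by decide)
    · exact ⟨h.2.1, h.2.2.2.1, h.2.2.2.2⟩
    · rw [hP] at h; exact absurd h.1 (by decide)
    · rcases h.1 with hh|hh
      · rw [hP] at hh; exact absurd hh.1 (by decide)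
      · rw [hP] at hh; exact absurd hh (by decide)
  obtain ⟨hEF1, hpar1, hd1⟩ := hREF
  by_cases habr : abRoot N (e n2') z
  · have hbreak : SegBreak N e u n2' :=
      ⟨z, hzr, hreach, ⟨habr, by rw [hP]; decide⟩, fun hc => hc.2 hEF1⟩
    have hlt : ((n2' : ℕ∞)) + 1 < t := by
      have h1 : ((n2'+1 : ℕ) : ℕ∞) ≤ (j : ℕ∞) := by exact_mod_cast hnj
      have h2 : ((n2' : ℕ∞)) + 1 = ((n2'+1 : ℕ) : ℕ∞) := by push_cast; ring
      rw [h2]; exact lt_of_le_of_lt h1 hjt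
    exact hseg.2.2.1 n2' (hsn2.trans han) hlt hbreak
  · have hdec : N.G.Adj z ((e n2').par z) ∧
        (e n2').d ((e n2').par z) + N.w z ((e n2').par z) ≤ (e n2').d z ∧
        (e n2').st ((e n2').par z) = RStatus.EB := by
      unfold abRoot at habr
      push_neg at habr
      have hnD := habr hzr (by rw [hP]; decide)
      obtain ⟨hadj, hsti, hge, himp⟩ := hnD
      refine ⟨hadj, hge, ?_⟩
      by_contra hne
      exact hne (himp (by rw [hP]; exact fun hh => hne hh.symm))
    obtain ⟨hadj, hge, hstz'⟩ := hdec
    have hreach' : N.G.Reachable ((e n2').par z) u := (hadj.symm.reachable).trans hreach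
    by_cases hEFall : ∀ l, n2' < l → l ≤ j → (e l).st z = RStatus.EF
    · -- Case A : z frozen with status EF up to j
      have hstj : (e j).st z = RStatus.EF := hEFall j (by omega) le_rfl
      have habrj : abRoot N (e j) z := by
        rcases hbad with h|h|h
        · rw [hstj] at h; exact absurd h (by decide)
        · rw [hstj] at h; exact absurd h (by decide)
        · exact h.2
      have hnoact : ∀ l, n2'+1 ≤ l → l < j → ¬ ExecAt N e l z := by
        intro l hl1 hl2 hx
        have hstl : (e l).st z = RStatus.EF := hEFall l (by omega) (by omega)
        have hstl1 : (e (l+1)).st z = RStatus.EF := hEFall (l+1) (by omega) (by omega)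
        rcases exec_master hx with h|h|h|h|h
        · rw [hstl] at h; exact absurd h.1 (by decide)
        · rw [hstl] at h; exact absurd h.1 (by decide)
        · rw [hstl] at h; exact absurd h.1 (by decide)
        · rw [hstl1] at h; exact absurd h.2.2.1 (by decide)
        · rw [hstl1] at h; exact absurd h.2.1 (by decide)
      have hfr := frozen he (show n2'+1 ≤ j by omega) hnoact
      have hfpar : (e j).par z = (e n2').par z := hfr.2.1.trans hpar1
      have hfd : (e j).d z = (e n2').d z := hfr.2.2.trans hd1
      have hI : (e j).st ((e n2').par z) = RStatus.I → False := by
        intro hIj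
        obtain ⟨l, hl1, hl2, hPl, hnPl⟩ :=
          exists_flip (P := fun l => ¬ ((e l).st ((e n2').par z) = RStatus.I))
            (show n2' ≤ j by omega) (by intro hh; rw [hstz'] at hh; exact absurd hh (by decide))
            (not_not.mpr hIj)
        have hstl1 : (e (l+1)).st ((e n2').par z) = RStatus.I := not_not.mp hnPl
        have hactl : ExecAt N e l ((e n2').par z) := by
          by_contra h
          exact hPl ((unchanged he h).1.symm.trans hstl1)
        have hltl : ((l:ℕ∞)) < t := lt_trans (by exact_mod_cast hl2) hjt
        rcases exec_master hactl with h|h|h|h|h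
        · rw [hstl1] at h; exact absurd h.2.1 (by decide)
        · rw [hstl1] at h; exact absurd h.2.1 (by decide)
        · rw [hstl1] at h; exact absurd h.2.1 (by decide)
        · exact IH l (by omega) ((e n2').par z) n2' h.2.2.2.1 hreach' (by omega) hl1 hltl
            hstz' (Or.inr (Or.inr ⟨h.1, h.2.1⟩))
        · rw [hstl1] at h; exact absurd h.2.1 (by decide)
      have hC : (e j).st ((e n2').par z) = RStatus.C → False := by
        intro hCj
        obtain ⟨l, hl1, hl2, hPl, hnPl⟩ :=
          exists_flip (P := fun l => ¬ ((e l).st ((e n2').par z) = RStatus.C))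
            (show n2' ≤ j by omega) (by intro hh; rw [hstz'] at hh; exact absurd hh (by decide))
            (not_not.mpr hCj)
        have hstl1 : (e (l+1)).st ((e n2').par z) = RStatus.C := not_not.mp hnPl
        have hactl : ExecAt N e l ((e n2').par z) := by
          by_contra h
          exact hPl ((unchanged he h).1.symm.trans hstl1)
        have hltl : ((l:ℕ∞)) < t := lt_trans (by exact_mod_cast hl2) hjt
        rcases exec_master hactl with h|h|h|h|h
        · exact hPl h.1
        · rw [hstl1] at h; exact absurd h.2.1 (by decide)
        · rw [hstl1] at h; exact absurd h.2.1 (by decide)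
        · rw [hstl1] at h; exact absurd h.2.2.1 (by decide)
        · rcases h.1 with hh|hh
          · exact IH l hl2 ((e n2').par z) n2' h.2.2.1 hreach' (by omega) hl1 hltl
              hstz' (Or.inr (Or.inr hh))
          · exact IH l hl2 ((e n2').par z) n2' h.2.2.1 hreach' (by omega) hl1 hltl
              hstz' (Or.inl hh)
      have hD : (e j).d ((e n2').par z) ≠ (e n2').d ((e n2').par z) → False := by
        intro hdj
        obtain ⟨l, hl1, hl2, hPl, hnPl⟩ :=
          exists_flip (P := fun l => (e l).d ((e n2').par z) = (e n2').d ((e n2').par z))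
            (show n2' ≤ j by omega) rfl hdj
        have hdch : (e (l+1)).d ((e n2').par z) ≠ (e l).d ((e n2').par z) :=
          fun h => hnPl (h.trans hPl)
        have hactl : ExecAt N e l ((e n2').par z) := by
          by_contra h
          exact hdch (unchanged he h).2.2
        have hltl : ((l:ℕ∞)) < t := lt_trans (by exact_mod_cast hl2) hjt
        rcases exec_master hactl with h|h|h|h|h
        · exact IH l hl2 ((e n2').par z) n2' h.2.2.1 hreach' (by omega) hl1 hltl
            hstz' (Or.inr (Or.inl h.1))
        · exact hdch h.2.2.2.2
        · exact hdch h.2.2.2.2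
        · exact hdch h.2.2.2.2.2
        · rcases h.1 with hh|hh
          · exact IH l hl2 ((e n2').par z) n2' h.2.2.1 hreach' (by omega) hl1 hltl
              hstz' (Or.inr (Or.inr hh))
          · exact IH l hl2 ((e n2').par z) n2' h.2.2.1 hreach' (by omega) hl1 hltl
              hstz' (Or.inl hh)
      obtain ⟨-, -, hdisj⟩ := habrj
      rw [hfpar] at hdisj
      rcases hdisj with h|h|h|⟨h1, h2⟩
      · exact h hadj
      · exact hI h
      · rw [hfd] at h
        have hne : (e j).d ((e n2').par z) ≠ (e n2').d ((e n2').par z) := by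
          intro heq
          rw [heq] at h
          exact absurd h (not_lt.mpr hge)
        exact hD hne
      · rw [hstj] at h1
        cases hc : (e j).st ((e n2').par z) with
        | I => exact hI hc
        | C => exact hC hc
        | EB => exact h2 hc
        | EF => exact h1 hc.symm
    · -- Case B : z leaves status EF before j
      push_neg at hEFall
      obtain ⟨n4, hn4a, hn4b, hn4ne⟩ := hEFall
      obtain ⟨l, hl1, hl2, hPl, hnPl⟩ :=
        exists_flip (P := fun l => (e l).st z = RStatus.EF)
          (show n2'+1 ≤ n4 by omega) hEF1 hn4ne
      have hactl : ExecAt N e l z := by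
        by_contra h
        exact hnPl ((unchanged he h).1.trans hPl)
      have hltl : ((l:ℕ∞)) < t := by
        have : l < j := by omega
        exact lt_trans (by exact_mod_cast this) hjt
      rcases exec_master hactl with h|h|h|h|h
      · rw [hPl] at h; exact absurd h.1 (by decide)
      · rw [hPl] at h; exact absurd h.1 (by decide)
      · rw [hPl] at h; exact absurd h.1 (by decide)
      · exact IH l (by omega) z n2 hzr hreach hsn2 (by omega) hltl hEB
          (Or.inr (Or.inr ⟨h.1, h.2.1⟩))
      · rcases h.1 with hh|hh
        · exact IH l (by omega) z n2 hzr hreach hsn2 (by omega) hltl hEB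
            (Or.inr (Or.inr hh))
        · rw [hPl] at hh; exact absurd hh (by decide)

lemma no_RR (he : IsExec N e) {u : V} {s : ℕ} {t : ℕ∞} (hseg : IsSegment N e u s t)
    {q : V} {a m : ℕ} (hqr : q ≠ N.r) (hreach : N.G.Reachable q u)
    (hsa : s ≤ a) (ham : a ≤ m) (hmt : (m:ℕ∞) < t) (hstC : (e a).st q = RStatus.C)
    (hRR : ExecRule N (e m) (e (m+1)) q RRule.RR) : False := by
  have hRR' : guardRR N (e m) q ∧ ComputePath N (e m) (e (m+1)) q := hRR
  have hg : PReset N (e m) q ∨ (e m).st q = RStatus.I := hRR'.1.2.1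
  have hnC : ¬ ((e m).st q = RStatus.C) := by
    rcases hg with ⟨hEF, -⟩ | hII
    · rw [hEF]; decide
    · rw [hII]; decide
  obtain ⟨l, hl1, hl2, hPl, hnPl⟩ :=
    exists_flip (P := fun l => (e l).st q = RStatus.C) ham hstC hnC
  have hactl : ExecAt N e l q := by
    by_contra h
    exact hnPl ((unchanged he h).1.trans hPl)
  rcases exec_master hactl with h|h|h|h|h
  · exact hnPl h.2.1
  · refine main_lemma he hseg m q (l+1) hqr hreach (by omega) (by omega) hmt h.2.1 ?_
    rcases hg with hh|hh
    · exact Or.inr (Or.inr hh)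
    · exact Or.inl hh
  · rw [hPl] at h; exact absurd h.1 (by decide)
  · rw [hPl] at h; exact absurd h.1 (by decide)
  · rcases h.1 with hh|hh
    · rw [hPl] at hh; exact absurd hh.1 (by decide)
    · rw [hPl] at hh; exact absurd hh (by decide)

lemma cp_computePath {j : ℕ} {v : V} (h : CPExec N e j v) :
    ComputePath N (e j) (e (j+1)) v ∧ v ≠ N.r := by
  rcases h with h|h
  · exact ⟨h.2, h.1.1⟩
  · exact ⟨h.2, h.1.1⟩

end Aux

/-- all actions of a maximal causal chain of a u-segment are executed
by pairwise distinct non-root processes of V_u; hence its length is at most the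
number of non-root processes of V_u, and no process executes an action of a chain
rooted at itself. -/
theorem stmt9 (N : Network V) (e : ℕ → Config V) (he : IsExec N e)
    (u : V) (hu : u ≠ N.r) (s : ℕ) (t : ℕ∞) (hseg : IsSegment N e u s t)
    (k : ℕ) (τ : Fin (k+1) → ℕ) (p : Fin (k+2) → V)
    (hch : IsMaxCausalChain N e s t k τ p)
    (hp0 : N.G.Reachable (p 0) u) :
    (∀ i : Fin (k+1), p i.succ ≠ N.r ∧ N.G.Reachable (p i.succ) u) ∧
    Function.Injective (fun i : Fin (k+1) => p i.succ) ∧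
    (∀ i : Fin (k+1), p i.succ ≠ p 0) ∧
    k + 1 ≤ {x : V | x ≠ N.r ∧ N.G.Reachable x u}.ncard := by
  obtain ⟨hcc, -⟩ := hch
  have hCP : ∀ i : Fin (k+1),
      ComputePath N (e (τ i)) (e (τ i + 1)) (p i.succ) ∧ p i.succ ≠ N.r :=
    fun i => cp_computePath (hcc.cp i).1
  have hpar : ∀ i : Fin (k+1), (e (τ i + 1)).par (p i.succ) = p i.castSucc :=
    fun i => (hcc.cp i).2
  have hadjp : ∀ i : Fin (k+1), N.G.Adj (p i.succ) (p i.castSucc) := by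
    intro i
    have := (hCP i).1.1
    rwa [hpar i] at this
  have hreach : ∀ i : Fin (k+2), N.G.Reachable (p i) u := by
    intro i
    induction i using Fin.induction with
    | zero => exact hp0
    | succ i ih => exact (hadjp i).reachable.trans ih
  set x : Fin (k+2) → ℝ :=
    Fin.cases ((e (τ 0)).d (p 0)) (fun i => (e (τ i + 1)).d (p i.succ)) with hx
  have hxsucc : ∀ i : Fin (k+1), x i.succ = (e (τ i + 1)).d (p i.succ) := by
    intro i; simp [hx]
  have hx0 : x 0 = (e (τ 0)).d (p 0) := by simp [hx]
  have hxstep : ∀ i : Fin (k+1), (e (τ i)).d (p i.castSucc) = x i.castSucc := by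
    intro i
    rcases Fin.eq_zero_or_eq_succ i with h0 | ⟨m, hm⟩
    · subst h0
      rw [Fin.castSucc_zero, hx0]
    · subst hm
      have hmono := hcc.mono (Fin.castSucc_lt_succ : m.castSucc < m.succ)
      have hfr := frozen (q := p m.castSucc.succ) he
        (show τ m.castSucc + 1 ≤ τ m.succ by omega)
        (fun l hl1 hl2 => hcc.between m l (by omega) hl2)
      calc (e (τ m.succ)).d (p m.succ.castSucc)
          = (e (τ m.castSucc + 1)).d (p m.castSucc.succ) := by
            rw [← Fin.succ_castSucc]; exact hfr.2.2
        _ = x (m.castSucc.succ) := (hxsucc m.castSucc).symm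
        _ = x m.succ.castSucc := by rw [Fin.succ_castSucc]
  have hxmono : StrictMono x := by
    refine Fin.strictMono_iff_lt_succ.2 (fun i => ?_)
    have hd := (hCP i).1.2.2.2.1
    rw [hpar i] at hd
    rw [hxsucc i, hd, ← hxstep i]
    have := N.w_pos _ _ (hadjp i)
    linarith
  have hstC1 : ∀ i : Fin (k+1), (e (τ i + 1)).st (p i.succ) = RStatus.C :=
    fun i => (hCP i).1.2.2.2.2
  have hnoRRgen : ∀ (q : V) (a m : ℕ), q ≠ N.r → N.G.Reachable q u → s ≤ a → a ≤ m →
      (m:ℕ∞) < t → (e a).st q = RStatus.C → ¬ ExecRule N (e m) (e (m+1)) q RRule.RR :=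
    fun q a m h1 h2 h3 h4 h5 h6 hrr => no_RR he hseg h1 h2 h3 h4 h5 h6 hrr
  have key : ∀ i j : Fin (k+1), i < j → p i.succ ≠ p j.succ := by
    intro i j hij heq
    have hqr : p i.succ ≠ N.r := (hCP i).2
    have hqreach : N.G.Reachable (p i.succ) u := hreach i.succ
    have hτij : τ i < τ j := hcc.mono hij
    have hnoRR : ∀ l, τ i + 1 ≤ l → l ≤ τ j →
        ¬ ExecRule N (e l) (e (l+1)) (p i.succ) RRule.RR := by
      intro l hl1 hl2 hrr
      have hlbi := hcc.lb i
      exact hnoRRgen (p i.succ) (τ i + 1) l hqr hqreach (by omega) (by omega)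
        (lt_of_le_of_lt (by exact_mod_cast hl2) (hcc.ub j)) (hstC1 i) hrr
    have hdm : (e (τ j)).d (p i.succ) ≤ (e (τ i + 1)).d (p i.succ) :=
      d_mono he (show τ i + 1 ≤ τ j by omega) (fun l hl1 hl2 => hnoRR l hl1 (by omega))
    have hRC : ExecRule N (e (τ j)) (e (τ j + 1)) (p j.succ) RRule.RC := by
      rcases (hcc.cp j).1 with h|h
      · exact h
      · rw [← heq] at h
        exact absurd h (hnoRR (τ j) (by omega) le_rfl)
    have hlt := d_lt_of_RC hRC
    rw [← heq] at hlt
    have hx1 : x i.succ < x j.succ := hxmono (Fin.succ_lt_succ_iff.mpr hij)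
    rw [hxsucc i, hxsucc j, ← heq] at hx1
    linarith
  have keyne : ∀ i : Fin (k+1), p i.succ ≠ p 0 := by
    intro i heq
    by_cases h0 : p 0 = N.r
    · exact (hCP i).2 (heq.trans h0)
    · have hst0 : (e (τ 0)).st (p 0) = RStatus.C := by
        have := (hCP 0).1.2.1
        rwa [hpar 0, Fin.castSucc_zero] at this
      have hτ0i : τ 0 ≤ τ i := hcc.mono.monotone (Fin.zero_le i)
      have hnoRR0 : ∀ l, τ 0 ≤ l → l ≤ τ i →
          ¬ ExecRule N (e l) (e (l+1)) (p 0) RRule.RR := by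
        intro l hl1 hl2 hrr
        exact hnoRRgen (p 0) (τ 0) l h0 hp0 (hcc.lb 0) hl1
          (lt_of_le_of_lt (by exact_mod_cast hl2) (hcc.ub i)) hst0 hrr
      have hdm : (e (τ i)).d (p 0) ≤ (e (τ 0)).d (p 0) :=
        d_mono he hτ0i (fun l hl1 hl2 => hnoRR0 l hl1 (by omega))
      have hRC : ExecRule N (e (τ i)) (e (τ i + 1)) (p i.succ) RRule.RC := by
        rcases (hcc.cp i).1 with h|h
        · exact h
        · rw [heq] at h
          exact absurd h (hnoRR0 (τ i) hτ0i le_rfl)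
      have hlt := d_lt_of_RC hRC
      rw [heq] at hlt
      have hx1 : x 0 < x i.succ := hxmono (Fin.succ_pos i)
      rw [hxsucc i, hx0, heq] at hx1
      linarith
  have hinj : Function.Injective (fun i : Fin (k+1) => p i.succ) := by
    intro i j h
    by_contra hne
    rcases lt_or_gt_of_ne hne with hlt|hlt
    · exact key i j hlt h
    · exact key j i hlt h.symm
  refine ⟨fun i => ⟨(hCP i).2, hreach i.succ⟩, hinj, keyne, ?_⟩
  have hf : Function.Injective (fun i : Fin (k+1) =>
      (⟨p i.succ, (hCP i).2, hreach i.succ⟩ :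
        {x : V | x ≠ N.r ∧ N.G.Reachable x u})) := by
    intro i j h
    exact hinj (congrArg Subtype.val h)
  have h1 : Nat.card (Fin (k+1)) ≤ Nat.card {x : V | x ≠ N.r ∧ N.G.Reachable x u} :=
    Nat.card_le_card_of_injective _ hf
  rw [← Nat.card_coe_set_eq]
  simpa using h1
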